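/- The block-insertion operation on symmetric groups is associative in the nested case: for σ ∈ Σ_n, τ ∈ Σ_m, ρ ∈ Σ_l and indices 1 ≤ i ≤ n, i ≤ j ≤ i+m−1, one has (σ ∘_i τ) ∘_j ρ = σ ∘_i (τ ∘_{j−i+1} ρ) in Σ_{n+m+l−2}. -/
import Mathlib

/-- Block insertion for (underlying functions of) permutations: `f ∘_i g`, where the
`i`-th strand of `f : Fin (n+1) → Fin (n+1)` is replaced by the block `g`. -/
def blockComp {n m : ℕ} (f : Fin (n+1) → Fin (n+1)) (i : Fin (n+1))
    (g : Fin (m+1) → Fin (m+1)) (k : Fin (n+m+1)) : Fin (n+m+1) :=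
  if h1 : (k : ℕ) < (i : ℕ) then
    let b : Fin (n+1) := ⟨(k : ℕ), by have := i.isLt; omega⟩
    ⟨(f b : ℕ) + (if (f i : ℕ) < (f b : ℕ) then m else 0),
      by have := (f b).isLt; split <;> omega⟩
  else if h2 : (k : ℕ) ≤ (i : ℕ) + m then
    let r : Fin (m+1) := ⟨(k : ℕ) - (i : ℕ), by omega⟩
    ⟨(f i : ℕ) + (g r : ℕ), by have := (f i).isLt; have := (g r).isLt; omega⟩
  else
    let b : Fin (n+1) := ⟨(k : ℕ) - m, by have := k.isLt; omega⟩
    ⟨(f b : ℕ) + (if (f i : ℕ) < (f b : ℕ) then m else 0),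
      by have := (f b).isLt; split <;> omega⟩

/-- ℕ-level version of `blockComp`. -/
def bcN (F : ℕ → ℕ) (i m : ℕ) (G : ℕ → ℕ) (k : ℕ) : ℕ :=
  if k < i then F k + (if F i < F k then m else 0)
  else if k ≤ i + m then F i + G (k - i)
  else F (k - m) + (if F i < F (k - m) then m else 0)

/-- Clamped ℕ-valued version of `f`. -/
def clamp {n : ℕ} (f : Fin (n+1) → Fin (n+1)) (a : ℕ) : ℕ :=
  (f ⟨min a n, by omega⟩ : ℕ)

lemma clamp_eq {n : ℕ} (f : Fin (n+1) → Fin (n+1)) (a : ℕ) (h : a ≤ n) :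
    clamp f a = (f ⟨a, by omega⟩ : ℕ) :=
  congrArg (fun x => ((f x : Fin (n+1)) : ℕ)) (Fin.ext (show min a n = a by omega))

lemma blockComp_val {n m : ℕ} (f : Fin (n+1) → Fin (n+1)) (i : Fin (n+1))
    (g : Fin (m+1) → Fin (m+1)) (k : Fin (n+m+1)) :
    (blockComp f i g k : ℕ) = bcN (clamp f) (i : ℕ) m (clamp g) (k : ℕ) := by
  have hi := i.isLt
  have hk := k.isLt
  by_cases h1 : (k : ℕ) < (i : ℕ)
  · rw [blockComp, dif_pos h1, bcN, if_pos h1,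
      clamp_eq f (k:ℕ) (by omega), clamp_eq f (i:ℕ) (by omega)]
  · by_cases h2 : (k : ℕ) ≤ (i : ℕ) + m
    · rw [blockComp, dif_neg h1, dif_pos h2, bcN, if_neg h1, if_pos h2,
        clamp_eq f (i:ℕ) (by omega), clamp_eq g ((k:ℕ) - (i:ℕ)) (by omega)]
    · rw [blockComp, dif_neg h1, dif_neg h2, bcN, if_neg h1, if_neg h2,
        clamp_eq f ((k:ℕ) - m) (by omega), clamp_eq f (i:ℕ) (by omega)]

set_option maxHeartbeats 1000000 in
lemma bcN_assoc (F G H F' G' : ℕ → ℕ) (n m l i j k : ℕ)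
    (hGb : ∀ a, G a ≤ m)
    (hFi : ∀ a, a ≤ n → a ≠ i → F a ≠ F i)
    (hF' : ∀ a, a ≤ n + m → F' a = bcN F i m G a)
    (hG' : ∀ a, a ≤ m + l → G' a = bcN G (j - i) l H a)
    (hi : i ≤ n) (hij : i ≤ j) (hj : j ≤ i + m) (hk : k ≤ n + m + l) :
    bcN F' j l H k = bcN F i (m + l) G' k := by
  have hG1 := hGb (j - i)
  have hG2 := hGb (k - i)
  have hG3 := hGb (k - l - i)
  have hF1 := hFi k
  have hF2 := hFi (k - l)
  have hF3 := hFi (k - (m + l))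
  have hF4 := hFi (k - m)
  rw [bcN, bcN]
  rcases show k < i ∨ (i ≤ k ∧ k < j) ∨ (j ≤ k ∧ k ≤ j + l) ∨
      (j + l < k ∧ k ≤ i + m + l) ∨ i + m + l < k by omega with h | h | h | h | h
  · rw [if_pos (by omega : k < j), if_pos (by omega : k < i),
      hF' k (by omega), hF' j (by omega)]
    simp only [bcN]
    split_ifs <;> omega
  · rw [if_pos (by omega : k < j), if_neg (by omega : ¬ k < i),
      if_pos (by omega : k ≤ i + (m + l)),
      hF' k (by omega), hF' j (by omega), hG' (k - i) (by omega)]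
    simp only [bcN]
    simp only [show k - i - (j - i) = k - j from by omega]
    split_ifs <;> omega
  · rw [if_neg (by omega : ¬ k < j), if_pos (by omega : k ≤ j + l),
      if_neg (by omega : ¬ k < i), if_pos (by omega : k ≤ i + (m + l)),
      hF' j (by omega), hG' (k - i) (by omega)]
    simp only [bcN]
    simp only [show k - i - (j - i) = k - j from by omega]
    split_ifs <;> omega
  · rw [if_neg (by omega : ¬ k < j), if_neg (by omega : ¬ k ≤ j + l),
      if_neg (by omega : ¬ k < i), if_pos (by omega : k ≤ i + (m + l)),
      hF' (k - l) (by omega), hF' j (by omega), hG' (k - i) (by omega)]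
    simp only [bcN]
    simp only [show k - i - l = k - l - i from by omega,
      show k - i - (j - i) = k - j from by omega]
    split_ifs <;> omega
  · rw [if_neg (by omega : ¬ k < j), if_neg (by omega : ¬ k ≤ j + l),
      if_neg (by omega : ¬ k < i), if_neg (by omega : ¬ k ≤ i + (m + l)),
      hF' (k - l) (by omega), hF' j (by omega)]
    simp only [bcN]
    simp only [show k - l - m = k - (m + l) from by omega]
    split_ifs <;> omega

/-- Associativity of block insertion on symmetric groups in the nested case:
`(σ ∘_i τ) ∘_j ρ = σ ∘_i (τ ∘_{j−i+1} ρ)` for `i ≤ j ≤ i+m−1` (stated pointwise). -/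
theorem stmt19 {n m l : ℕ} (σ : Equiv.Perm (Fin (n+1))) (τ : Equiv.Perm (Fin (m+1)))
    (ρ : Equiv.Perm (Fin (l+1))) (i : Fin (n+1)) (j : ℕ)
    (hij : (i : ℕ) ≤ j) (hj : j ≤ (i : ℕ) + m) (k : ℕ) (hk : k < n+m+l+1) :
    (blockComp (blockComp ⇑σ i ⇑τ) ⟨j, by have := i.isLt; omega⟩ ⇑ρ ⟨k, by omega⟩ : ℕ) =
      (blockComp ⇑σ i (blockComp ⇑τ ⟨j - (i : ℕ), by omega⟩ ⇑ρ) ⟨k, by omega⟩ : ℕ) := by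
  have hi := i.isLt
  have h1 : (blockComp (blockComp ⇑σ i ⇑τ) ⟨j, by omega⟩ ⇑ρ ⟨k, by omega⟩ : ℕ)
      = bcN (clamp (blockComp ⇑σ i ⇑τ)) j l (clamp ⇑ρ) k :=
    blockComp_val (n := n + m) (m := l) _ ⟨j, by omega⟩ ⇑ρ ⟨k, by omega⟩
  have h2 : (blockComp ⇑σ i (blockComp ⇑τ ⟨j - (i : ℕ), by omega⟩ ⇑ρ) ⟨k, by omega⟩ : ℕ)
      = bcN (clamp ⇑σ) (i : ℕ) (m + l) (clamp (blockComp ⇑τ ⟨j - (i : ℕ), by omega⟩ ⇑ρ)) k :=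
    blockComp_val (n := n) (m := m + l) ⇑σ i _ ⟨k, by omega⟩
  rw [h1, h2]
  refine bcN_assoc (clamp ⇑σ) (clamp ⇑τ) (clamp ⇑ρ) _ _ n m l (i : ℕ) j k ?_ ?_ ?_ ?_
    (by omega) hij hj (by omega)
  · exact fun a => Nat.lt_succ_iff.mp (τ ⟨min a m, by omega⟩).isLt
  · intro a ha hne h
    rw [clamp_eq (⇑σ) a ha, clamp_eq (⇑σ) (i : ℕ) (by omega)] at h
    exact hne (congrArg Fin.val (σ.injective (Fin.ext h)))
  · intro a ha
    rw [clamp_eq _ a ha]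
    exact blockComp_val (⇑σ) i (⇑τ) ⟨a, by omega⟩
  · intro a ha
    rw [clamp_eq _ a ha]
    exact blockComp_val (⇑τ) ⟨j - (i : ℕ), by omega⟩ (⇑ρ) ⟨a, by omega⟩
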